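/- Let n ≥ 1 be an integer. On the elliptic curve W_n over ℚ(t) given by y² = x³ + (1−2tⁿ)x² + t^{2n}x, the point P = (tⁿ, tⁿ) is a ℚ(t)-rational point satisfying 2P = (0,0), and P has order exactly 4 in the group of ℚ(t)-rational points. -/

import Mathlib

/-- `W_n`: the Weierstrass curve `y² = x³ + (1 - 2tⁿ)x² + t^{2n}x` over `ℚ(t)`,
a Weierstrass model of the elliptic surface `Z_(n)`. -/
noncomputable def Wn (n : ℕ) : WeierstrassCurve (RatFunc ℚ) :=
  ⟨0, 1 - 2 * RatFunc.X ^ n, 0, RatFunc.X ^ (2 * n), 0⟩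

instance : CharZero (RatFunc ℚ) :=
  charZero_of_injective_algebraMap (RatFunc.algebraMap_injective ℚ)

open Classical in
/-- For `n ≥ 1`, on the elliptic curve `W_n : y² = x³ + (1 - 2tⁿ)x² + t^{2n}x` over `ℚ(t)`,
the point `P = (tⁿ, tⁿ)` is a rational point satisfying `2P = (0, 0)`, and `P` has order
exactly `4` in the group of `ℚ(t)`-rational points. -/
theorem stmt8 (n : ℕ) (hn : 1 ≤ n) :
    ∃ (h : (Wn n).toAffine.Nonsingular (RatFunc.X ^ n) (RatFunc.X ^ n))
      (h0 : (Wn n).toAffine.Nonsingular 0 0),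
      2 • (WeierstrassCurve.Affine.Point.some _ _ h) = WeierstrassCurve.Affine.Point.some _ _ h0 ∧
      addOrderOf (WeierstrassCurve.Affine.Point.some _ _ h) = 4 := by
  set t : RatFunc ℚ := RatFunc.X ^ n with ht_def
  have ht : t ≠ 0 := pow_ne_zero n RatFunc.X_ne_zero
  have h2n : RatFunc.X ^ (2 * n) = t ^ 2 := by rw [ht_def, ← pow_mul, mul_comm]
  have ha1 : (Wn n).toAffine.a₁ = 0 := rfl
  have ha2 : (Wn n).toAffine.a₂ = 1 - 2 * t := rfl
  have ha3 : (Wn n).toAffine.a₃ = 0 := rfl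
  have ha4 : (Wn n).toAffine.a₄ = t ^ 2 := h2n
  have ha6 : (Wn n).toAffine.a₆ = 0 := rfl
  have hyne : t ≠ (Wn n).toAffine.negY t t := by
    rw [WeierstrassCurve.Affine.negY, ha1, ha3]
    intro h
    apply ht
    have : (2 : RatFunc ℚ) * t = 0 := by linear_combination h
    exact (mul_eq_zero.mp this).resolve_left two_ne_zero
  have h : (Wn n).toAffine.Nonsingular t t := by
    rw [WeierstrassCurve.Affine.nonsingular_iff, WeierstrassCurve.Affine.equation_iff,
      ha1, ha2, ha3, ha4, ha6]
    exact ⟨by ring, Or.inr hyne⟩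
  have h0 : (Wn n).toAffine.Nonsingular 0 0 := by
    rw [WeierstrassCurve.Affine.nonsingular_iff, WeierstrassCurve.Affine.equation_iff,
      ha1, ha2, ha3, ha4, ha6]
    refine ⟨by ring, Or.inl ?_⟩
    simpa using (pow_ne_zero 2 ht).symm
  refine ⟨h, h0, ?_⟩
  have hslope : (Wn n).toAffine.slope t t t t = 1 := by
    rw [WeierstrassCurve.Affine.slope_of_Y_ne rfl hyne, WeierstrassCurve.Affine.negY,
      ha1, ha2, ha3, ha4]
    rw [div_eq_one_iff_eq (by
      intro hden
      apply ht
      have : (2 : RatFunc ℚ) * t = 0 := by linear_combination hden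
      exact (mul_eq_zero.mp this).resolve_left two_ne_zero)]
    ring
  have haddX : (Wn n).toAffine.addX t t ((Wn n).toAffine.slope t t t t) = 0 := by
    rw [hslope, WeierstrassCurve.Affine.addX, ha1, ha2]; ring
  have haddY : (Wn n).toAffine.addY t t t ((Wn n).toAffine.slope t t t t) = 0 := by
    rw [hslope, WeierstrassCurve.Affine.addY, WeierstrassCurve.Affine.negAddY,
      WeierstrassCurve.Affine.negY, WeierstrassCurve.Affine.addX, ha1, ha2, ha3]
    ring
  have hdbl : 2 • (WeierstrassCurve.Affine.Point.some _ _ h) =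
      WeierstrassCurve.Affine.Point.some _ _ h0 := by
    rw [two_smul, WeierstrassCurve.Affine.Point.add_self_of_Y_ne hyne]
    simp_rw [haddX, haddY]
  refine ⟨hdbl, ?_⟩
  have hT2 : (2 : ℕ) • (WeierstrassCurve.Affine.Point.some _ _ h0) = 0 := by
    rw [two_smul]
    exact WeierstrassCurve.Affine.Point.add_self_of_Y_eq (by
      rw [WeierstrassCurve.Affine.negY, ha1, ha3]; ring)
  have h4 : (2 ^ 2 : ℕ) • (WeierstrassCurve.Affine.Point.some _ _ h) = 0 := by
    have : (2 ^ 2 : ℕ) • (WeierstrassCurve.Affine.Point.some _ _ h)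
        = 2 • (2 • (WeierstrassCurve.Affine.Point.some _ _ h)) := by
      rw [show (2^2:ℕ) = 2*2 by norm_num, mul_smul]
    rw [this, hdbl, hT2]
  have h2ne : ¬ (2 ^ 1 : ℕ) • (WeierstrassCurve.Affine.Point.some _ _ h) = 0 := by
    rw [pow_one, hdbl]
    exact WeierstrassCurve.Affine.Point.some_ne_zero h0
  have := addOrderOf_eq_prime_pow (x := WeierstrassCurve.Affine.Point.some _ _ h) h2ne h4
  simpa using this
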